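/- Let R, S be finite digraphs, D' a class of finite digraphs, and G_{D'}(R) ≡ {G_ξ : ξ ∈ H(G,R), G ∈ D'}. If #S(G,R) ≤ #S(G,S) for all G ∈ G_{D'}(R), then R ⊑_Γ S with respect to D'. -/

import Mathlib

/-- A homomorphism between digraphs `(V, A)` and `(W, B)`:
a map sending every arc to an arc. -/
def IsHom {V W : Type} (A : V → V → Prop) (B : W → W → Prop) (f : V → W) : Prop :=
  ∀ ⦃v w : V⦄, A v w → B (f v) (f w)

/-- A strict homomorphism: a homomorphism mapping proper arcs to proper arcs. -/
def IsStrictHom {V W : Type} (A : V → V → Prop) (B : W → W → Prop) (f : V → W) : Prop :=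
  IsHom A B f ∧ ∀ ⦃v w : V⦄, A v w → v ≠ w → f v ≠ f w

/-- Adjacency in a digraph. -/
def DAdj {V : Type} (A : V → V → Prop) (v w : V) : Prop := A v w ∨ A w v

/-- `v` and `w` are connected in `X`: `v = w` (with `v ∈ X`), or there is a line
`z 0, …, z I` inside `X` connecting them, consecutive members being adjacent. -/
def ConnIn {V : Type} (A : V → V → Prop) (X : Set V) (v w : V) : Prop :=
  ∃ (I : ℕ) (z : ℕ → V), z 0 = v ∧ z I = w ∧ (∀ i ≤ I, z i ∈ X) ∧
    ∀ i < I, DAdj A (z i) (z (i + 1))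

/-- `γ_X(v)`: the set of `w ∈ X` connected with `v` in `X`. -/
def gammaSet {V : Type} (A : V → V → Prop) (X : Set V) (v : V) : Set V :=
  {w | ConnIn A X v w}

/-- `Γ_ξ(v)`: the connectivity component of `v` in the preimage `ξ⁻¹(ξ(v))`. -/
def GammaComp {V W : Type} (A : V → V → Prop) (ξ : V → W) (v : V) : Set V :=
  gammaSet A {u | ξ u = ξ v} v

/-- The set of homomorphisms `H(G,H)` (as a type). -/
def HomSet {V W : Type} (A : V → V → Prop) (B : W → W → Prop) : Type :=
  {f : V → W // IsHom A B f}

/-- The set of strict homomorphisms `S(G,H)` (as a type). -/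
def StrictHomSet {V W : Type} (A : V → V → Prop) (B : W → W → Prop) : Type :=
  {f : V → W // IsStrictHom A B f}

/-- The vertex set of the digraph `G_ξ`: the components `Γ_ξ(v)`, `v ∈ V(G)`. -/
def GVert {V W : Type} (A : V → V → Prop) (ξ : V → W) : Type :=
  {C : Set V // ∃ v, C = GammaComp A ξ v}

/-- The arc relation of the digraph `G_ξ`. -/
def GArc {V W : Type} (A : V → V → Prop) (ξ : V → W) :
    GVert A ξ → GVert A ξ → Prop :=
  fun C D => ∃ a ∈ C.1, ∃ b ∈ D.1, A a b

/-- The canonical map `π_ξ : G → G_ξ`, `v ↦ Γ_ξ(v)`. -/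
def piMap {V W : Type} (A : V → V → Prop) (ξ : V → W) (v : V) : GVert A ξ :=
  ⟨GammaComp A ξ v, v, rfl⟩

/-- `Θ_{G,H'}(ξ)`: the homomorphisms `ζ : G → H'` with `G_ζ = G_ξ`
(equality of the digraphs `G_ζ` and `G_ξ`, i.e. of their vertex sets,
which determines the arc sets). -/
def ThetaSet {V W W' : Type} (A : V → V → Prop) (B' : W' → W' → Prop)
    (ξ : V → W) : Set (V → W') :=
  {ζ | IsHom A B' ζ ∧
    {C : Set V | ∃ v, C = GammaComp A ζ v} = {C : Set V | ∃ v, C = GammaComp A ξ v}}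

/-- `R ⊑_Γ S` with respect to a class `D'` of finite digraphs: a strong Γ-scheme
from `R` to `S` exists, i.e. for every finite digraph `G ∈ D'` an injective map
`ρ_G : H(G,R) → H(G,S)` with `Γ_{ρ_G(ξ)}(v) = Γ_ξ(v)` for all `ξ`, `v`. -/
def SqGamma (D' : (V : Type) → (V → V → Prop) → Prop)
    {VR VS : Type} (R : VR → VR → Prop) (S : VS → VS → Prop) : Prop :=
  ∀ (V : Type) [Finite V] [Nonempty V] (A : V → V → Prop), D' V A →
    ∃ ρ : HomSet A R → HomSet A S, Function.Injective ρ ∧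
      ∀ (ξ : HomSet A R) (v : V), GammaComp A (ρ ξ).1 v = GammaComp A ξ.1 v

/-- The class `T_a`: digraphs whose loop-removed digraph is acyclic,
i.e. every closed walk is trivial. -/
def Ta {V : Type} (A : V → V → Prop) : Prop :=
  ∀ (z : ℕ → V) (I : ℕ), 0 < I →
    (∀ i < I, A (z i) (z (i + 1)) ∧ z i ≠ z (i + 1)) → z 0 ≠ z I

/-- A poset: a reflexive, antisymmetric, transitive digraph. -/
def IsPosetRel {V : Type} (A : V → V → Prop) : Prop :=
  Reflexive A ∧ AntiSymmetric A ∧ Transitive A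

/-- An element of `P^*`: an irreflexive, antisymmetric, transitive digraph. -/
def IsStrictPosetRel {V : Type} (A : V → V → Prop) : Prop :=
  Irreflexive A ∧ AntiSymmetric A ∧ Transitive A

/-- The direct (disjoint) sum of two digraphs. -/
def sumRel {V W : Type} (A : V → V → Prop) (B : W → W → Prop) :
    V ⊕ W → V ⊕ W → Prop
  | Sum.inl v, Sum.inl w => A v w
  | Sum.inr v, Sum.inr w => B v w
  | _, _ => False

/-- The open neighborhood `N(v)`. -/
def Nbr {Z : Type} (A : Z → Z → Prop) (v : Z) : Set Z :=
  {w | w ≠ v ∧ (A v w ∨ A w v)}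

/-- The in-neighborhood `N^in(v)`. -/
def NIn {Z : Type} (A : Z → Z → Prop) (v : Z) : Set Z :=
  {w | w ≠ v ∧ A w v}

/-- The out-neighborhood `N^out(v)`. -/
def NOut {Z : Type} (A : Z → Z → Prop) (v : Z) : Set Z :=
  {w | w ≠ v ∧ A v w}

/-- `A_r`: the arcs of `R` minus all arcs between `M` and `X`. -/
def ArRel {Z : Type} (A : Z → Z → Prop) (X M : Set Z) : Z → Z → Prop :=
  fun v w => A v w ∧ ¬(v ∈ M ∧ w ∈ X) ∧ ¬(v ∈ X ∧ w ∈ M)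

/-- `A_d = { m β(x) : m x ∈ A(R) ∩ (M × X) }`. -/
def AdRel {Z : Type} (A : Z → Z → Prop) (X M : Set Z) (β : Z → Z) : Z → Z → Prop :=
  fun v w => v ∈ M ∧ ∃ x ∈ X, A v x ∧ w = β x

/-- `A_u = { β(x) m : x m ∈ A(R) ∩ (X × M) }`. -/
def AuRel {Z : Type} (A : Z → Z → Prop) (X M : Set Z) (β : Z → Z) : Z → Z → Prop :=
  fun v w => w ∈ M ∧ ∃ x ∈ X, A x w ∧ v = β x

/-- The rearranged digraph `S`, with `A(S) = A_r ∪ A_d ∪ A_u`. -/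
def SRel {Z : Type} (A : Z → Z → Prop) (X M : Set Z) (β : Z → Z) : Z → Z → Prop :=
  fun v w => ArRel A X M v w ∨ AdRel A X M β v w ∨ AuRel A X M β v w

/-- `U_ξ = { v : ξ(v) ∈ T and ξ[N_G(v)] ∩ M ≠ ∅ }` (for `T = X`; with `T = Y`
this gives `U'_ζ`). -/
def USet {V Z : Type} (AG : V → V → Prop) (T M : Set Z) (ξ : V → Z) : Set V :=
  {v | ξ v ∈ T ∧ ∃ w ∈ Nbr AG v, ξ w ∈ M}

open Classical in
/-- The rearranged homomorphism `ρ_G(ξ)`: `β(ξ(v))` on `U_ξ` and `ξ(v)` elsewhere. -/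
noncomputable def rhoMap {V Z : Type} (AG : V → V → Prop) (X M : Set Z) (β : Z → Z)
    (ξ : V → Z) : V → Z :=
  fun v => if v ∈ USet AG X M ξ then β (ξ v) else ξ v


section Aux

variable {V W W' : Type}

def connRel (A : V → V → Prop) (X : Set V) : V → V → Prop :=
  fun a b => a ∈ X ∧ b ∈ X ∧ DAdj A a b

lemma connRel_symm {A : V → V → Prop} {X : Set V} : Symmetric (connRel A X) := by
  rintro a b ⟨ha, hb, hadj⟩
  exact ⟨hb, ha, hadj.symm⟩

lemma connIn_iff (A : V → V → Prop) (X : Set V) (v w : V) :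
    ConnIn A X v w ↔ v ∈ X ∧ Relation.ReflTransGen (connRel A X) v w := by
  constructor
  · rintro ⟨I, z, rfl, rfl, hmem, hadj⟩
    refine ⟨hmem 0 (Nat.zero_le _), ?_⟩
    have key : ∀ J, J ≤ I → Relation.ReflTransGen (connRel A X) (z 0) (z J) := by
      intro J
      induction J with
      | zero => intro _; exact .refl
      | succ n ih =>
        intro hJ
        exact (ih (Nat.le_of_succ_le hJ)).tail
          ⟨hmem n (by omega), hmem (n+1) hJ, hadj n (by omega)⟩
    exact key I le_rfl
  · rintro ⟨hv, hrt⟩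
    induction hrt with
    | refl =>
      exact ⟨0, fun _ => v, rfl, rfl, fun i _ => hv,
        fun i hi => absurd hi (Nat.not_lt_zero i)⟩
    | @tail b c _ hbc ih =>
      obtain ⟨I, z, h0, hI, hmem, hadj⟩ := ih
      refine ⟨I + 1, fun i => if i ≤ I then z i else c, by simp [h0], by simp, ?_, ?_⟩
      · intro i hi
        by_cases hiI : i ≤ I
        · simpa [hiI] using hmem i hiI
        · simpa [hiI] using hbc.2.1
      · intro i hi
        by_cases hiI : i < I
        · simpa [Nat.le_of_lt hiI, Nat.succ_le_of_lt hiI] using hadj i hiI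
        · have hiI' : i = I := by omega
          subst hiI'
          simpa [hI] using hbc.2.2

lemma connIn_refl {A : V → V → Prop} {X : Set V} {v : V} (hv : v ∈ X) :
    ConnIn A X v v := (connIn_iff A X v v).2 ⟨hv, .refl⟩

lemma connIn_right_mem {A : V → V → Prop} {X : Set V} {v w : V}
    (h : ConnIn A X v w) : w ∈ X := by
  obtain ⟨I, z, h0, hI, hmem, _⟩ := h
  subst hI; exact hmem I le_rfl

lemma connIn_left_mem {A : V → V → Prop} {X : Set V} {v w : V}
    (h : ConnIn A X v w) : v ∈ X := ((connIn_iff A X v w).1 h).1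

lemma connIn_trans {A : V → V → Prop} {X : Set V} {v w u : V}
    (h1 : ConnIn A X v w) (h2 : ConnIn A X w u) : ConnIn A X v u := by
  rw [connIn_iff] at *
  exact ⟨h1.1, h1.2.trans h2.2⟩

lemma connIn_symm {A : V → V → Prop} {X : Set V} {v w : V}
    (h : ConnIn A X v w) : ConnIn A X w v := by
  have hw := connIn_right_mem h
  rw [connIn_iff] at *
  exact ⟨hw, (haveI : Std.Symm (connRel A X) := ⟨connRel_symm⟩; Std.Symm.symm _ _ h.2)⟩

lemma mem_gammaComp_self {A : V → V → Prop} (ξ : V → W) (v : V) :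
    v ∈ GammaComp A ξ v := connIn_refl rfl

lemma gammaComp_value {A : V → V → Prop} {ξ : V → W} {v w : V}
    (h : w ∈ GammaComp A ξ v) : ξ w = ξ v := by
  have h' : ConnIn A {u | ξ u = ξ v} v w := h
  have : w ∈ {u | ξ u = ξ v} := connIn_right_mem h'
  exact this

lemma mem_gammaComp_of_adj {A : V → V → Prop} {ξ : V → W} {a b : V}
    (hadj : DAdj A a b) (hval : ξ b = ξ a) : b ∈ GammaComp A ξ a :=
  (connIn_iff A _ a b).2 ⟨rfl, .single ⟨rfl, hval, hadj⟩⟩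

lemma gammaComp_eq_of_mem {A : V → V → Prop} {ξ : V → W} {v w : V}
    (h : w ∈ GammaComp A ξ v) : GammaComp A ξ w = GammaComp A ξ v := by
  have hval : ξ w = ξ v := gammaComp_value h
  have hX : {u | ξ u = ξ w} = {u | ξ u = ξ v} := by ext u; simp [hval]
  unfold GammaComp gammaSet
  rw [hX]
  ext u
  exact ⟨fun hu => connIn_trans h hu, fun hu => connIn_trans (connIn_symm h) hu⟩

lemma piMap_eq_iff {A : V → V → Prop} {ξ : V → W} {u v : V} :
    piMap A ξ u = piMap A ξ v ↔ u ∈ GammaComp A ξ v := by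
  constructor
  · intro h
    have h1 : GammaComp A ξ u = GammaComp A ξ v := congrArg Subtype.val h
    exact h1 ▸ mem_gammaComp_self ξ u
  · intro h
    exact Subtype.ext (gammaComp_eq_of_mem h)

variable {A : V → V → Prop} {ξ₀ : V → W} {B : W' → W' → Prop}

lemma comp_isHom {g : GVert A ξ₀ → W'} (hg : IsHom (GArc A ξ₀) B g) :
    IsHom A B (fun u => g (piMap A ξ₀ u)) := by
  intro v w hvw
  exact hg ⟨v, mem_gammaComp_self ξ₀ v, w, mem_gammaComp_self ξ₀ w, hvw⟩

lemma gammaComp_comp {g : GVert A ξ₀ → W'} (hg : IsStrictHom (GArc A ξ₀) B g) (v : V) :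
    GammaComp A (fun u => g (piMap A ξ₀ u)) v = GammaComp A ξ₀ v := by
  set ζ : V → W' := fun u => g (piMap A ξ₀ u) with hζ
  ext w
  constructor
  · -- ζ-component ⊆ ξ₀-component
    intro hw
    obtain ⟨-, hrt⟩ := (connIn_iff A _ v w).1 hw
    have key : ∀ b, Relation.ReflTransGen (connRel A {u | ζ u = ζ v}) v b →
        piMap A ξ₀ b = piMap A ξ₀ v := by
      intro b hb
      induction hb with
      | refl => rfl
      | @tail b c _ hbc ih =>
        have hπc : piMap A ξ₀ c = piMap A ξ₀ b := by
          by_contra hne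
          have hgne : g (piMap A ξ₀ b) ≠ g (piMap A ξ₀ c) := by
            rcases hbc.2.2 with hbc' | hcb'
            · exact hg.2 ⟨b, mem_gammaComp_self ξ₀ b, c, mem_gammaComp_self ξ₀ c, hbc'⟩
                (fun hh => hne hh.symm)
            · exact fun hh => hg.2 ⟨c, mem_gammaComp_self ξ₀ c, b, mem_gammaComp_self ξ₀ b, hcb'⟩
                (fun hh' => hne hh') hh.symm
          have : ζ b = ζ c := by
            have h1 : ζ b = ζ v := hbc.1
            have h2 : ζ c = ζ v := hbc.2.1
            rw [h1, h2]
          exact hgne this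
        rw [hπc, ih]
    have := key w hrt
    exact piMap_eq_iff.1 this
  · -- ξ₀-component ⊆ ζ-component
    intro hw
    obtain ⟨-, hrt⟩ := (connIn_iff A _ v w).1 hw
    show ConnIn A {u | ζ u = ζ v} v w
    rw [connIn_iff]
    refine ⟨rfl, ?_⟩
    have key : ∀ b, Relation.ReflTransGen (connRel A {u | ξ₀ u = ξ₀ v}) v b →
        Relation.ReflTransGen (connRel A {u | ζ u = ζ v}) v b ∧
          piMap A ξ₀ b = piMap A ξ₀ v := by
      intro b hb
      induction hb with
      | refl => exact ⟨.refl, rfl⟩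
      | @tail b c _ hbc ih =>
        have hπc : piMap A ξ₀ c = piMap A ξ₀ b := by
          apply piMap_eq_iff.2
          apply mem_gammaComp_of_adj (A := A) hbc.2.2
          show ξ₀ c = ξ₀ b
          have h1 : ξ₀ b = ξ₀ v := hbc.1
          have h2 : ξ₀ c = ξ₀ v := hbc.2.1
          rw [h2, h1]
        have hπc' : piMap A ξ₀ c = piMap A ξ₀ v := by rw [hπc, ih.2]
        have hζb : ζ b = ζ v := congrArg g ih.2
        have hζc : ζ c = ζ v := congrArg g hπc'
        exact ⟨ih.1.tail ⟨hζb, hζc, hbc.2.2⟩, hπc'⟩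
    exact (key w hrt).1

noncomputable def liftMap (A : V → V → Prop) (ξ₀ : V → W) (ζ : V → W')
    (C : GVert A ξ₀) : W' := ζ (Classical.choose C.2)

lemma liftMap_spec {ζ : V → W'}
    (hΓ : ∀ v, GammaComp A ζ v = GammaComp A ξ₀ v)
    {C : GVert A ξ₀} {a : V} (ha : a ∈ C.1) : liftMap A ξ₀ ζ C = ζ a := by
  have hspec := Classical.choose_spec C.2
  set c := Classical.choose C.2
  have : a ∈ GammaComp A ζ c := by rw [hΓ c, ← hspec]; exact ha
  exact (gammaComp_value this).symm

lemma liftMap_pi {ζ : V → W'}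
    (hΓ : ∀ v, GammaComp A ζ v = GammaComp A ξ₀ v) (v : V) :
    liftMap A ξ₀ ζ (piMap A ξ₀ v) = ζ v :=
  liftMap_spec hΓ (mem_gammaComp_self ξ₀ v)

lemma liftMap_isStrictHom {ζ : V → W'} (hζ : IsHom A B ζ)
    (hΓ : ∀ v, GammaComp A ζ v = GammaComp A ξ₀ v) :
    IsStrictHom (GArc A ξ₀) B (liftMap A ξ₀ ζ) := by
  constructor
  · rintro C D ⟨a, ha, b, hb, hab⟩
    rw [liftMap_spec hΓ ha, liftMap_spec hΓ hb]
    exact hζ hab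
  · rintro C D ⟨a, ha, b, hb, hab⟩ hne heq
    rw [liftMap_spec hΓ ha, liftMap_spec hΓ hb] at heq
    apply hne
    have hbmem : b ∈ GammaComp A ξ₀ a := by
      rw [← hΓ a]
      exact mem_gammaComp_of_adj (Or.inl hab) heq.symm
    have hC : C = piMap A ξ₀ a := by
      apply Subtype.ext
      have hspec := Classical.choose_spec C.2
      have : a ∈ GammaComp A ξ₀ (Classical.choose C.2) := hspec ▸ ha
      rw [hspec]
      exact (gammaComp_eq_of_mem this).symm
    have hD : D = piMap A ξ₀ b := by
      apply Subtype.ext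
      have hspec := Classical.choose_spec D.2
      have : b ∈ GammaComp A ξ₀ (Classical.choose D.2) := hspec ▸ hb
      rw [hspec]
      exact (gammaComp_eq_of_mem this).symm
    rw [hC, hD]
    exact (piMap_eq_iff.2 hbmem).symm

lemma liftMap_comp_pi (g : GVert A ξ₀ → W') (C : GVert A ξ₀) :
    liftMap A ξ₀ (fun u => g (piMap A ξ₀ u)) C = g C := by
  have hspec := Classical.choose_spec C.2
  have : C = piMap A ξ₀ (Classical.choose C.2) := Subtype.ext hspec
  conv_rhs => rw [this]
  rfl

/-- The fiber over `ξ₀`'s component structure is equivalent to the strict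
homomorphisms from the quotient digraph `G_{ξ₀}`. -/
noncomputable def fiberEquiv (A : V → V → Prop) (ξ₀ : V → W) (B : W' → W' → Prop) :
    {ζ : HomSet A B // (fun v => GammaComp A ζ.1 v) = fun v => GammaComp A ξ₀ v} ≃
      StrictHomSet (GArc A ξ₀) B where
  toFun p := ⟨liftMap A ξ₀ p.1.1, liftMap_isStrictHom p.1.2 (fun v => congrFun p.2 v)⟩
  invFun q := ⟨⟨fun u => q.1 (piMap A ξ₀ u), comp_isHom q.2.1⟩,
    funext fun v => gammaComp_comp q.2 v⟩
  left_inv p := by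
    apply Subtype.ext; apply Subtype.ext
    exact funext fun v => liftMap_pi (fun v => congrFun p.2 v) v
  right_inv q := by
    apply Subtype.ext
    exact funext fun C => liftMap_comp_pi q.1 C

end Aux

/-- If `#S(G,R) ≤ #S(G,S)` for all `G ∈ G_{D'}(R) = {G_ξ : ξ ∈ H(G,R), G ∈ D'}`,
then `R ⊑_Γ S` with respect to `D'`. -/
theorem stmt6 {VR VS : Type} [Finite VR] [Nonempty VR] [Finite VS] [Nonempty VS]
    (R : VR → VR → Prop) (S : VS → VS → Prop)
    (D' : (V : Type) → (V → V → Prop) → Prop)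
    (h : ∀ (V : Type) [Finite V] [Nonempty V] (A : V → V → Prop), D' V A →
      ∀ ξ : V → VR, IsHom A R ξ →
        Nat.card (StrictHomSet (GArc A ξ) R) ≤ Nat.card (StrictHomSet (GArc A ξ) S)) :
    SqGamma D' R S := by
  intro V _ _ A hD
  classical
  have instVR : Finite VR := inferInstance
  -- key functions recording component structures
  let keyR : HomSet A R → (V → Set V) := fun ξ v => GammaComp A ξ.1 v
  let keyS : HomSet A S → (V → Set V) := fun ζ v => GammaComp A ζ.1 v
  -- finiteness
  have finHR : Finite (HomSet A R) := Subtype.finite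
  have finHS : Finite (HomSet A S) := Subtype.finite
  -- for each key value, an embedding between fibers
  have embNE : ∀ k : V → Set V,
      Nonempty ({ξ : HomSet A R // keyR ξ = k} ↪ {ζ : HomSet A S // keyS ζ = k}) := by
    intro k
    by_cases hk : ∃ ξ₀ : HomSet A R, keyR ξ₀ = k
    · obtain ⟨ξ₀, rfl⟩ := hk
      have eR : {ξ : HomSet A R // keyR ξ = keyR ξ₀} ≃ StrictHomSet (GArc A ξ₀.1) R :=
        fiberEquiv A ξ₀.1 R
      have eS : {ζ : HomSet A S // keyS ζ = keyR ξ₀} ≃ StrictHomSet (GArc A ξ₀.1) S :=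
        fiberEquiv A ξ₀.1 S
      have hle := h V A hD ξ₀.1 ξ₀.2
      have hcard : Nat.card {ξ : HomSet A R // keyR ξ = keyR ξ₀} ≤
          Nat.card {ζ : HomSet A S // keyS ζ = keyR ξ₀} := by
        rw [Nat.card_congr eR, Nat.card_congr eS]
        exact hle
      have fin1 : Finite {ξ : HomSet A R // keyR ξ = keyR ξ₀} := Subtype.finite
      have fin2 : Finite {ζ : HomSet A S // keyS ζ = keyR ξ₀} := Subtype.finite
      have f1 := Fintype.ofFinite {ξ : HomSet A R // keyR ξ = keyR ξ₀}
      have f2 := Fintype.ofFinite {ζ : HomSet A S // keyS ζ = keyR ξ₀}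
      apply Function.Embedding.nonempty_of_card_le
      rwa [← Nat.card_eq_fintype_card, ← Nat.card_eq_fintype_card]
    · have : IsEmpty {ξ : HomSet A R // keyR ξ = k} := ⟨fun x => hk ⟨x.1, x.2⟩⟩
      exact ⟨Function.Embedding.ofIsEmpty⟩
  let emb : ∀ k : V → Set V,
      {ξ : HomSet A R // keyR ξ = k} ↪ {ζ : HomSet A S // keyS ζ = k} :=
    fun k => (embNE k).some
  let rho : HomSet A R → HomSet A S := fun ξ => (emb (keyR ξ) ⟨ξ, rfl⟩).1
  have hkey : ∀ ξ, keyS (rho ξ) = keyR ξ := fun ξ => (emb (keyR ξ) ⟨ξ, rfl⟩).2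
  have rho_eq : ∀ (ξ : HomSet A R) (k : V → Set V) (hk : keyR ξ = k),
      rho ξ = (emb k ⟨ξ, hk⟩).1 := by
    intro ξ k hk
    subst hk
    rfl
  refine ⟨rho, ?_, ?_⟩
  · intro ξ₁ ξ₂ heq
    have hk : keyR ξ₁ = keyR ξ₂ := by rw [← hkey ξ₁, ← hkey ξ₂, heq]
    have e1 : rho ξ₁ = (emb (keyR ξ₂) ⟨ξ₁, hk⟩).1 := rho_eq ξ₁ (keyR ξ₂) hk
    have e2 : rho ξ₂ = (emb (keyR ξ₂) ⟨ξ₂, rfl⟩).1 := rfl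
    have : (emb (keyR ξ₂)) ⟨ξ₁, hk⟩ = (emb (keyR ξ₂)) ⟨ξ₂, rfl⟩ :=
      Subtype.ext (by rw [← e1, ← e2, heq])
    have := (emb (keyR ξ₂)).injective this
    exact congrArg Subtype.val this
  · intro ξ v
    exact congrFun (hkey ξ) v
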